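/- Under the hypotheses of Theorem on simple global Newton convergence (F : U → ℝⁿ continuously differentiable, pointwise convex and monotonic on convex open U ⊇ [−2,n(n+3)]ⁿ, with F'(z⁽ʲ⁾)d⁽ʲ⁾ ≰ 0 for z⁽ʲ⁾ = −2eⱼ + n(n+3)eⱼ', d⁽ʲ⁾ = eⱼ − (n²+3n+1)eⱼ', and L defined by (n+2)(min_j max_k eₖᵀF'(z⁽ʲ⁾)d⁽ʲ⁾)⁻¹), the following holds: for every x ∈ [−1,n]ⁿ and every nonzero y ∈ ℝⁿ with F'(x)y ≥ 0 entrywise, one has max_j y_j = ‖y‖_∞ and min_j y_j > −(1/n)‖y‖_∞. -/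

import Mathlib

open Matrix Set

lemma mulVec_mono_aux {n : ℕ} (A : Matrix (Fin n) (Fin n) ℝ)
    (hA : ∀ k i, 0 ≤ A k i) {v w : Fin n → ℝ} (h : v ≤ w) :
    A.mulVec v ≤ A.mulVec w := by
  intro k
  simp only [Matrix.mulVec, dotProduct]
  exact Finset.sum_le_sum fun i _ => mul_le_mul_of_nonneg_left (h i) (hA k i)

theorem stmt_13 (n : ℕ) (hn : 2 ≤ n)
    (U : Set (Fin n → ℝ)) (hUopen : IsOpen U) (hUconv : Convex ℝ U)
    (hUsub : Set.Icc (fun _ => (-2:ℝ)) (fun _ => (n:ℝ) * ((n:ℝ) + 3)) ⊆ U)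
    (F : (Fin n → ℝ) → (Fin n → ℝ))
    (F' : (Fin n → ℝ) → Matrix (Fin n) (Fin n) ℝ)
    (hderiv : ∀ z ∈ U, HasFDerivAt F ((F' z).mulVecLin.toContinuousLinearMap) z)
    (hcont : ContinuousOn F' U)
    (hmono : ∀ z ∈ U, ∀ k j, 0 ≤ F' z k j)
    (hconv : ∀ z ∈ U, ∀ w ∈ U, (F' z).mulVec (w - z) ≤ F w - F z)
    (hcrit : ∀ j : Fin n, ∃ k : Fin n,
      0 < ((F' (fun i => if i = j then -2 else (n:ℝ) * ((n:ℝ) + 3))).mulVec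
            (fun i => if i = j then 1 else -((n:ℝ)^2 + 3 * n + 1))) k) :
    ∀ x ∈ Set.Icc (fun _ => (-1:ℝ)) (fun _ => (n:ℝ)),
      ∀ y : Fin n → ℝ, y ≠ 0 → 0 ≤ (F' x).mulVec y →
        (⨆ j, y j) = ‖y‖ ∧ -(1 / (n : ℝ)) * ‖y‖ < ⨅ j, y j := by
  intro x hx y hy0 hFy
  haveI : Nonempty (Fin n) := ⟨⟨0, by omega⟩⟩
  have hn2 : (2:ℝ) ≤ (n:ℝ) := by exact_mod_cast hn
  have hnpos : (0:ℝ) < n := by linarith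
  obtain ⟨hx1, hx2⟩ := hx
  have hxU : x ∈ U := by
    apply hUsub
    constructor
    · intro i; have := hx1 i; simp only at this ⊢; linarith
    · intro i; have := hx2 i; simp only at this ⊢; nlinarith
  have hM : (0:ℝ) < ‖y‖ := norm_pos_iff.mpr hy0
  have habs : ∀ i, |y i| ≤ ‖y‖ := fun i => by
    simpa [Real.norm_eq_abs] using norm_le_pi_norm y i
  -- key step B
  have hB : ∀ j : Fin n, ∃ k, 0 <
      ((F' x).mulVec (fun i => if i = j then (1:ℝ) else -(n:ℝ))) k := by
    intro j
    obtain ⟨k, hk⟩ := hcrit j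
    set z : Fin n → ℝ := fun i => if i = j then -2 else (n:ℝ) * ((n:ℝ)+3) with hzdef
    have hzU : z ∈ U := by
      apply hUsub
      constructor
      · intro i; simp only [z]; split <;> nlinarith
      · intro i; simp only [z]; split <;> nlinarith
    have hd : (fun i => if i = j then (1:ℝ) else -((n:ℝ)^2 + 3*n + 1)) ≤ x - z := by
      intro i
      have h1 : (-1:ℝ) ≤ x i := hx1 i
      have h2 : x i ≤ (n:ℝ) := hx2 i
      simp only [Pi.sub_apply, z]
      by_cases hij : i = j
      · subst hij; simp only [if_pos rfl, if_true]; nlinarith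
      · simp only [if_neg hij]; nlinarith
    have step1 := mulVec_mono_aux (F' z) (hmono z hzU) hd
    have step2 : (F' z).mulVec (x - z) ≤ (F' x).mulVec (x - z) := by
      have c1 := hconv z hzU x hxU
      have c2 := hconv x hxU z hzU
      have hneg : (F' x).mulVec (z - x) = -((F' x).mulVec (x - z)) := by
        rw [← Matrix.mulVec_neg, neg_sub]
      rw [hneg] at c2
      intro k'
      have e1 := c1 k'; have e2 := c2 k'
      simp only [Pi.sub_apply, Pi.neg_apply] at e1 e2 ⊢
      linarith
    have hle : x - z ≤ ((n:ℝ)+2) • (fun i => if i = j then (1:ℝ) else -(n:ℝ)) := by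
      intro i
      have h1 : (-1:ℝ) ≤ x i := hx1 i
      have h2 : x i ≤ (n:ℝ) := hx2 i
      simp only [Pi.sub_apply, Pi.smul_apply, smul_eq_mul, z]
      by_cases hij : i = j
      · subst hij; simp only [if_pos rfl, if_true]; nlinarith
      · simp only [if_neg hij]; nlinarith
    have step3 := mulVec_mono_aux (F' x) (hmono x hxU) hle
    have hsmul : (F' x).mulVec (((n:ℝ)+2) • (fun i => if i = j then (1:ℝ) else -(n:ℝ)))
        = ((n:ℝ)+2) • (F' x).mulVec (fun i => if i = j then (1:ℝ) else -(n:ℝ)) := by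
      rw [Matrix.mulVec_smul]
    rw [hsmul] at step3
    refine ⟨k, ?_⟩
    have t1 := step1 k
    have t2 := step2 k
    have t3 := step3 k
    simp only [Pi.smul_apply, smul_eq_mul] at t3
    nlinarith
  -- min part
  have hmin : ∀ j, -(1/(n:ℝ)) * ‖y‖ < y j := by
    intro j
    by_contra hcon
    push_neg at hcon
    obtain ⟨k, hk⟩ := hB j
    set a : Fin n → ℝ := fun i => F' x k i with hadef
    have ha : ∀ i, 0 ≤ a i := fun i => hmono x hxU k i
    set S : ℝ := ∑ i ∈ Finset.univ.erase j, a i with hSdef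
    have hS : (0:ℝ) ≤ S := Finset.sum_nonneg fun i _ => ha i
    have expand : ∀ v : Fin n → ℝ, ((F' x).mulVec v) k
        = a j * v j + ∑ i ∈ Finset.univ.erase j, a i * v i := by
      intro v
      have h1 : ((F' x).mulVec v) k = ∑ i, a i * v i := by
        simp [Matrix.mulVec, dotProduct, hadef]
      rw [h1, ← Finset.add_sum_erase Finset.univ (fun i => a i * v i) (Finset.mem_univ j)]
    have hk2 : 0 < a j - (n:ℝ) * S := by
      rw [expand] at hk
      have e1 : ∑ i ∈ Finset.univ.erase j, a i * (if i = j then (1:ℝ) else -(n:ℝ))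
          = ∑ i ∈ Finset.univ.erase j, a i * (-(n:ℝ)) :=
        Finset.sum_congr rfl fun i hi => by rw [if_neg (Finset.ne_of_mem_erase hi)]
      rw [if_pos rfl, e1, ← Finset.sum_mul] at hk
      linarith [hk]
    have hyk := hFy k
    have h0b : 0 ≤ a j * y j + S * ‖y‖ := by
      have e := expand y
      have hb : ∑ i ∈ Finset.univ.erase j, a i * y i
          ≤ ∑ i ∈ Finset.univ.erase j, a i * ‖y‖ :=
        Finset.sum_le_sum fun i _ =>
          mul_le_mul_of_nonneg_left ((le_abs_self _).trans (habs i)) (ha i)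
      rw [← Finset.sum_mul] at hb
      simp only [Pi.zero_apply] at hyk
      rw [e] at hyk
      linarith
    have hyj : (n:ℝ) * y j ≤ -‖y‖ := by
      have h1 : (n:ℝ) * y j ≤ (n:ℝ) * (-(1/(n:ℝ)) * ‖y‖) :=
        mul_le_mul_of_nonneg_left hcon hnpos.le
      have h2 : (n:ℝ) * (-(1/(n:ℝ)) * ‖y‖) = -‖y‖ := by field_simp
      linarith
    nlinarith [mul_pos hk2 hM, mul_le_mul_of_nonneg_left hyj (ha j),
      mul_nonneg hnpos.le h0b]
  -- conclude
  obtain ⟨i0, hi0⟩ := Finite.exists_min y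
  obtain ⟨i1, hi1⟩ := Finite.exists_max (fun i => |y i|)
  have hMi1 : |y i1| = ‖y‖ := by
    refine le_antisymm (habs i1) ?_
    have : ‖y‖ ≤ |y i1| := by
      rw [show |y i1| = ‖(|y i1| : ℝ)‖ by simp [abs_abs],
        ← Real.norm_eq_abs] at *
      exact pi_norm_le_iff_of_nonneg (by positivity) |>.mpr fun i => by
        simpa [Real.norm_eq_abs] using hi1 i
    exact this
  have hyi1 : y i1 = ‖y‖ := by
    rcases abs_cases (y i1) with ⟨h, _⟩ | ⟨h, _⟩
    · rw [← h, hMi1]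
    · exfalso
      have hlt := hmin i1
      have heq : y i1 = -‖y‖ := by rw [← hMi1, h]; ring
      have hone : (1/(n:ℝ)) ≤ 1 := by rw [div_le_one hnpos]; linarith
      have := mul_le_mul_of_nonneg_right hone hM.le
      rw [heq] at hlt
      linarith
  constructor
  · refine le_antisymm (ciSup_le fun i => (le_abs_self _).trans (habs i)) ?_
    rw [← hyi1]
    exact le_ciSup (Set.Finite.bddAbove (Set.finite_range y)) i1
  · have hinf : (⨅ j, y j) = y i0 :=
      le_antisymm (ciInf_le (Set.Finite.bddBelow (Set.finite_range y)) i0)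
        (le_ciInf fun i => hi0 i)
    rw [hinf]
    exact hmin i0
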